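/- Let Ω = (0,1)×(1,2) ⊂ ℝ² and define z(x,y) = (3/5)·x^{2/3}·(1 − y^{5/3}/2^{5/3}). Then: (i) for every (x,y) ∈ Ω, z(x,y) + x·∂z/∂x(x,y) − y·∂z/∂y(x,y) = x^{2/3}; (ii) z(x,2) = 0 for every x ∈ (0,1); (iii) the Dirichlet integral ∫∫_Ω ((∂z/∂x)² + (∂z/∂y)²) dx dy is finite. -/

import Mathlib

open MeasureTheory Set Real

/-- The domain Ω = (0,1) × (1,2). -/
def Omega0 : Set (ℝ × ℝ) := Ioo (0:ℝ) 1 ×ˢ Ioo (1:ℝ) 2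

/-- The explicit solution z(x,y) = (3/5)·x^{2/3}·(1 − y^{5/3}/2^{5/3}) of Example 1. -/
noncomputable def zEx1 : ℝ × ℝ → ℝ := fun p =>
  (3/5) * p.1 ^ ((2:ℝ)/3) * (1 - p.2 ^ ((5:ℝ)/3) / (2:ℝ) ^ ((5:ℝ)/3))

/-- Partial derivative ∂z/∂x. -/
noncomputable def zEx1x (p : ℝ × ℝ) : ℝ := deriv (fun t => zEx1 (t, p.2)) p.1

/-- Partial derivative ∂z/∂y. -/
noncomputable def zEx1y (p : ℝ × ℝ) : ℝ := deriv (fun t => zEx1 (p.1, t)) p.2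

lemma zx_eq (x y : ℝ) (hx : 0 < x) :
    zEx1x (x, y) = (2/5) * x ^ (-(1:ℝ)/3) * (1 - y ^ ((5:ℝ)/3) / (2:ℝ) ^ ((5:ℝ)/3)) := by
  have h : HasDerivAt (fun t : ℝ => zEx1 (t, y))
      ((3/5) * ((2:ℝ)/3 * x ^ ((2:ℝ)/3 - 1)) * (1 - y ^ ((5:ℝ)/3) / (2:ℝ) ^ ((5:ℝ)/3))) x := by
    have h1 := ((Real.hasDerivAt_rpow_const (x := x) (p := (2:ℝ)/3) (Or.inl hx.ne')).const_mul
      ((3:ℝ)/5)).mul_const (1 - y ^ ((5:ℝ)/3) / (2:ℝ) ^ ((5:ℝ)/3))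
    simpa [zEx1] using h1
  have he : (2:ℝ)/3 - 1 = -(1:ℝ)/3 := by norm_num
  rw [zEx1x, h.deriv, he]; ring

lemma zy_eq (x y : ℝ) (hy : 0 < y) :
    zEx1y (x, y) = -(x ^ ((2:ℝ)/3) * y ^ ((2:ℝ)/3) / (2:ℝ) ^ ((5:ℝ)/3)) := by
  have h : HasDerivAt (fun t : ℝ => zEx1 (x, t))
      ((3/5) * x ^ ((2:ℝ)/3) * (-((5:ℝ)/3 * y ^ ((5:ℝ)/3 - 1) / (2:ℝ) ^ ((5:ℝ)/3)))) y := by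
    have h1 := (Real.hasDerivAt_rpow_const (x := y) (p := (5:ℝ)/3) (Or.inl hy.ne')).div_const
      ((2:ℝ) ^ ((5:ℝ)/3))
    have h2 := ((hasDerivAt_const y (1:ℝ)).sub h1).const_mul ((3:ℝ)/5 * x ^ ((2:ℝ)/3))
    simpa [zEx1, mul_assoc, mul_comm, mul_left_comm] using h2
  have he : (5:ℝ)/3 - 1 = (2:ℝ)/3 := by norm_num
  rw [zEx1y, h.deriv, he]; ring

lemma key : ∫⁻ p : ℝ × ℝ in Ioo (0:ℝ) 1 ×ˢ Ioo (1:ℝ) 2,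
    ENNReal.ofReal (p.1 ^ (-(2:ℝ)/3) + 1) < ⊤ := by
  have hmeas : Measurable (fun p : ℝ × ℝ => ENNReal.ofReal (p.1 ^ (-(2:ℝ)/3) + 1)) := by
    measurability
  have hrw : (volume : Measure (ℝ × ℝ)).restrict (Ioo (0:ℝ) 1 ×ˢ Ioo (1:ℝ) 2)
      = (volume.restrict (Ioo (0:ℝ) 1)).prod (volume.restrict (Ioo (1:ℝ) 2)) := by
    rw [MeasureTheory.Measure.volume_eq_prod, Measure.prod_restrict]
  rw [hrw, lintegral_prod _ hmeas.aemeasurable]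
  simp only [lintegral_const, Measure.restrict_apply MeasurableSet.univ,
    Set.univ_inter, Real.volume_Ioo]
  norm_num
  have hint : IntegrableOn (fun x : ℝ => x ^ (-(2/3) : ℝ) + 1) (Ioo (0:ℝ) 1) := by
    have h1 : IntegrableOn (fun x : ℝ => x ^ (-(2/3) : ℝ)) (Ioo (0:ℝ) 1) :=
      (intervalIntegral.integrableOn_Ioo_rpow_iff one_pos).mpr (by norm_num)
    have h2 : IntegrableOn (fun _ : ℝ => (1:ℝ)) (Ioo (0:ℝ) 1) :=
      (integrableOn_const_iff (by simp)).mpr (Or.inr (by simp))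
    exact h1.add h2
  exact hint.setLIntegral_lt_top

theorem stmt_0 :
    (∀ p ∈ Omega0, zEx1 p + p.1 * zEx1x p - p.2 * zEx1y p = p.1 ^ ((2:ℝ)/3)) ∧
    (∀ x ∈ Ioo (0:ℝ) 1, zEx1 (x, 2) = 0) ∧
    (∫⁻ p in Omega0, ENNReal.ofReal ((zEx1x p) ^ 2 + (zEx1y p) ^ 2) < ⊤) := by
  refine ⟨?_, ?_, ?_⟩
  · rintro ⟨x, y⟩ ⟨hx, hy⟩
    simp only [Set.mem_Ioo] at hx hy
    have hx0 : 0 < x := hx.1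
    have hy0 : (0:ℝ) < y := lt_trans one_pos hy.1
    rw [zx_eq x y hx0, zy_eq x y hy0]
    have h1 : x * x ^ (-(1:ℝ)/3) = x ^ ((2:ℝ)/3) := by
      nth_rewrite 1 [← Real.rpow_one x]
      rw [← Real.rpow_add hx0]; norm_num
    have h2 : y * y ^ ((2:ℝ)/3) = y ^ ((5:ℝ)/3) := by
      nth_rewrite 1 [← Real.rpow_one y]
      rw [← Real.rpow_add hy0]; norm_num
    have h3 : (2:ℝ) ^ ((5:ℝ)/3) ≠ 0 := by positivity
    have h1' : x * ((2:ℝ)/5 * x ^ (-(1:ℝ)/3) * (1 - y ^ ((5:ℝ)/3) / (2:ℝ) ^ ((5:ℝ)/3)))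
        = (2:ℝ)/5 * x ^ ((2:ℝ)/3) * (1 - y ^ ((5:ℝ)/3) / (2:ℝ) ^ ((5:ℝ)/3)) := by
      rw [← h1]; ring
    have h2' : y * (-(x ^ ((2:ℝ)/3) * y ^ ((2:ℝ)/3) / (2:ℝ) ^ ((5:ℝ)/3)))
        = -(x ^ ((2:ℝ)/3) * y ^ ((5:ℝ)/3) / (2:ℝ) ^ ((5:ℝ)/3)) := by
      rw [← h2]; ring
    simp only [zEx1]
    rw [h1', h2']
    field_simp
    ring
  · intro x hx
    have h3 : (2:ℝ) ^ ((5:ℝ)/3) ≠ 0 := by positivity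
    simp [zEx1, div_self h3]
  · -- Finiteness of the Dirichlet integral
    have hbound : ∀ p ∈ Omega0, ENNReal.ofReal ((zEx1x p) ^ 2 + (zEx1y p) ^ 2)
        ≤ ENNReal.ofReal (p.1 ^ (-(2:ℝ)/3) + 1) := by
      rintro ⟨x, y⟩ ⟨hx, hy⟩
      simp only [Set.mem_Ioo] at hx hy
      have hx0 : 0 < x := hx.1
      have hy0 : (0:ℝ) < y := lt_trans one_pos hy.1
      apply ENNReal.ofReal_le_ofReal
      rw [zx_eq x y hx0, zy_eq x y hy0]
      have hw0 : 0 < y ^ ((5:ℝ)/3) / (2:ℝ) ^ ((5:ℝ)/3) := by positivity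
      have hw1 : y ^ ((5:ℝ)/3) / (2:ℝ) ^ ((5:ℝ)/3) < 1 := by
        rw [div_lt_one (by positivity)]
        exact Real.rpow_lt_rpow hy0.le hy.2 (by norm_num)
      have ha : (x ^ (-(1:ℝ)/3)) ^ 2 = x ^ (-(2:ℝ)/3) := by
        rw [← Real.rpow_natCast (x ^ (-(1:ℝ)/3)) 2, ← Real.rpow_mul hx0.le]
        norm_num
      have hxp : 0 < x ^ (-(2:ℝ)/3) := by positivity
      have hb1 : x ^ ((2:ℝ)/3) ≤ 1 := Real.rpow_le_one hx0.le hx.2.le (by norm_num)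
      have hb1' : 0 ≤ x ^ ((2:ℝ)/3) := by positivity
      have hb2 : y ^ ((2:ℝ)/3) ≤ 2 ^ ((2:ℝ)/3) :=
        Real.rpow_le_rpow hy0.le hy.2.le (by norm_num)
      have hb2' : 0 ≤ y ^ ((2:ℝ)/3) := by positivity
      have hb3 : (2:ℝ) ^ ((2:ℝ)/3) ≤ 2 ^ ((5:ℝ)/3) :=
        Real.rpow_le_rpow_left_iff (by norm_num) |>.mpr (by norm_num)
      have hb4 : (0:ℝ) < 2 ^ ((5:ℝ)/3) := by positivity
      have hzy : |(-(x ^ ((2:ℝ)/3) * y ^ ((2:ℝ)/3) / (2:ℝ) ^ ((5:ℝ)/3)))| ≤ 1 := by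
        rw [abs_neg, abs_div, abs_of_nonneg (by positivity), abs_of_nonneg (by positivity),
          div_le_one hb4]
        calc x ^ ((2:ℝ)/3) * y ^ ((2:ℝ)/3) ≤ 1 * (2 ^ ((2:ℝ)/3)) := by
              exact mul_le_mul hb1 hb2 hb2' one_pos.le
          _ ≤ 2 ^ ((5:ℝ)/3) := by rw [one_mul]; exact hb3
      have hzy2 : (-(x ^ ((2:ℝ)/3) * y ^ ((2:ℝ)/3) / (2:ℝ) ^ ((5:ℝ)/3))) ^ 2 ≤ 1 := by
        have := (sq_le_one_iff_abs_le_one _).mpr hzy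
        linarith [this]
      have hzx2 : ((2:ℝ)/5 * x ^ (-(1:ℝ)/3) * (1 - y ^ ((5:ℝ)/3) / (2:ℝ) ^ ((5:ℝ)/3))) ^ 2
          ≤ x ^ (-(2:ℝ)/3) := by
        have h1w : (1 - y ^ ((5:ℝ)/3) / (2:ℝ) ^ ((5:ℝ)/3)) ^ 2 ≤ 1 := by nlinarith
        calc ((2:ℝ)/5 * x ^ (-(1:ℝ)/3) * (1 - y ^ ((5:ℝ)/3) / (2:ℝ) ^ ((5:ℝ)/3))) ^ 2
            = (4/25) * (x ^ (-(1:ℝ)/3)) ^ 2 * (1 - y ^ ((5:ℝ)/3) / (2:ℝ) ^ ((5:ℝ)/3)) ^ 2 := by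
              ring
          _ ≤ (4/25) * (x ^ (-(1:ℝ)/3)) ^ 2 * 1 := by
              apply mul_le_mul_of_nonneg_left h1w (by positivity)
          _ ≤ x ^ (-(2:ℝ)/3) := by rw [mul_one, ha]; nlinarith
      linarith
    have hmeas : Measurable (fun p : ℝ × ℝ => ENNReal.ofReal (p.1 ^ (-(2:ℝ)/3) + 1)) := by
      measurability
    have hΩ : MeasurableSet Omega0 := measurableSet_Ioo.prod measurableSet_Ioo
    calc ∫⁻ p in Omega0, ENNReal.ofReal ((zEx1x p) ^ 2 + (zEx1y p) ^ 2)
        ≤ ∫⁻ p in Omega0, ENNReal.ofReal (p.1 ^ (-(2:ℝ)/3) + 1) :=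
          setLIntegral_mono hmeas hbound
      _ < ⊤ := by
          rw [Omega0]; exact key
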